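/- Let G be a connected graph and S a simultaneous dominating set in G. Then S can be extended to a vertex cover C of G with |C| ≤ 2|S| − 1. -/

import Mathlib

open SimpleGraph

variable {V : Type*}

/-- Number of connected components of a graph. -/
noncomputable def numComponents (G : SimpleGraph V) : ℕ := Nat.card G.ConnectedComponent

/-- A vertex is a cut vertex if its removal increases the number of connected components. -/
def IsCutVertex (G : SimpleGraph V) (v : V) : Prop :=
  numComponents G < numComponents (G.induce {u | u ≠ v})

/-- `T` is a spanning tree of `G`: a subgraph on all vertices of `G` that is a tree. -/
def IsSpanningTree (G T : SimpleGraph V) : Prop := T ≤ G ∧ T.IsTree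

/-- `v` is dominated by `S` in the graph `T`. -/
def DominatedIn (T : SimpleGraph V) (S : Set V) (v : V) : Prop :=
  v ∈ S ∨ ∃ u ∈ S, T.Adj v u

/-- `v` is simultaneously dominated by `S`: dominated in every spanning tree of `G`. -/
def SimDominated (G : SimpleGraph V) (S : Set V) (v : V) : Prop :=
  ∀ T : SimpleGraph V, IsSpanningTree G T → DominatedIn T S v

/-- `S` is a simultaneous dominating set of `G`. -/
def IsSDSet (G : SimpleGraph V) (S : Set V) : Prop := ∀ v, SimDominated G S v

/-- `C` is a vertex cover of `G`. -/
def IsVertexCover (G : SimpleGraph V) (C : Set V) : Prop :=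
  ∀ ⦃u v : V⦄, G.Adj u v → u ∈ C ∨ v ∈ C

/-- A block of `G`: a maximal vertex set inducing a connected subgraph without cut vertices. -/
def IsBlock (G : SimpleGraph V) (B : Set V) : Prop :=
  B.Nonempty ∧ (G.induce B).Connected ∧ (∀ x, ¬ IsCutVertex (G.induce B) x) ∧
    ∀ B' : Set V, B ⊆ B' → (G.induce B').Connected →
      (∀ x, ¬ IsCutVertex (G.induce B') x) → B' = B

/-- 2-connected: connected, at least 3 vertices, no cut vertex. -/
def TwoConnected (G : SimpleGraph V) [Fintype V] : Prop :=
  G.Connected ∧ 3 ≤ Fintype.card V ∧ ∀ v, ¬ IsCutVertex G v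

/-- Colours 1, 0, 0̂. -/
inductive Col : Type
  | one | zero | zhat
deriving DecidableEq

/-- `S` is an `f`-respecting simultaneous dominating set of `G`. -/
def RespSDS (G : SimpleGraph V) (f : V → Col) (S : Set V) : Prop :=
  (∀ v, f v = Col.one → v ∈ S) ∧ ∀ v, f v = Col.zhat → SimDominated G S v

/-- A minimum `f`-respecting simultaneous dominating set. -/
def MinRespSDS (G : SimpleGraph V) (f : V → Col) (S : Set V) : Prop :=
  RespSDS G f S ∧ ∀ S' : Set V, RespSDS G f S' → S.ncard ≤ S'.ncard

namespace Stmt5Aux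

variable {V : Type*}

lemma edges_mapLe {G H : SimpleGraph V} (h : G ≤ H) {u v : V} (p : G.Walk u v) :
    (p.mapLe h).edges = p.edges := by
  simp only [Walk.mapLe, Walk.edges_map]
  have : Sym2.map (Hom.ofLE h) = id := by
    ext e
    induction e using Sym2.ind with
    | _ a b => simp [Hom.ofLE_apply]
  rw [this, List.map_id]

lemma connected_sdiff_of_reachable {H : SimpleGraph V} (hH : H.Connected) {a b : V}
    (hr : (H \ fromEdgeSet {s(a, b)}).Reachable a b) :
    (H \ fromEdgeSet {s(a, b)}).Connected := by
  rw [connected_iff]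
  refine ⟨fun x y => ?_, hH.nonempty⟩
  obtain ⟨W⟩ := hH.preconnected x y
  induction W with
  | nil => exact Reachable.refl _
  | @cons x₁ x₂ y h q ih =>
    refine Reachable.trans ?_ ih
    by_cases he : s(x₁, x₂) = s(a, b)
    · rw [Sym2.eq_iff] at he
      rcases he with ⟨rfl, rfl⟩ | ⟨rfl, rfl⟩
      · exact hr
      · exact hr.symm
    · refine Adj.reachable ?_
      rw [sdiff_adj]
      refine ⟨h, fun hc => he ?_⟩
      rw [fromEdgeSet_adj] at hc
      simpa using hc.1

/-- On a geodesic walk, interior vertices are strictly closer to the far end. -/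
lemma support_dist_lt {G : SimpleGraph V} {x r y : V} (W : G.Walk x r)
    (hlen : W.length = G.dist x r) (hy : y ∈ W.support) (hne : y ≠ x) :
    G.dist y r < G.dist x r := by
  classical
  have hspec := W.take_spec hy
  have hl : (W.takeUntil y hy).length + (W.dropUntil y hy).length = W.length := by
    rw [← Walk.length_append, hspec]
  have htp : (W.takeUntil y hy).length ≠ 0 := fun h0 =>
    hne (Walk.eq_of_length_eq_zero h0).symm
  have hd : G.dist y r ≤ (W.dropUntil y hy).length := dist_le _
  omega

open Classical in
/-- Parent of `x` in a tree, towards root `r`. -/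
noncomputable def par (T : SimpleGraph V) (r x : V) : V :=
  if h : T.Reachable x r then (Classical.choose h.exists_walk_length_eq_dist).getVert 1 else x

lemma par_spec {T : SimpleGraph V} (hT : T.IsTree) (r : V) {x : V} (hx : x ≠ r) :
    T.Adj x (par T r x) ∧ T.dist (par T r x) r + 1 = T.dist x r := by
  have hreach : T.Reachable x r := hT.isConnected x r
  rw [par, dif_pos hreach]
  set W := Classical.choose hreach.exists_walk_length_eq_dist with hWdef
  have hlen : W.length = T.dist x r :=
    Classical.choose_spec hreach.exists_walk_length_eq_dist
  have hpos : 0 < T.dist x r := hT.isConnected.pos_dist_of_ne hx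
  have hadj : T.Adj x (W.getVert 1) := by
    have := W.adj_getVert_succ (i := 0) (by omega)
    simpa using this
  refine ⟨hadj, ?_⟩
  have hmem : W.getVert 1 ∈ W.support :=
    Walk.mem_support_iff_exists_getVert.mpr ⟨1, rfl, by omega⟩
  have hne1 : W.getVert 1 ≠ x := fun h => (h ▸ hadj).ne rfl
  have hlt : T.dist (W.getVert 1) r < T.dist x r := support_dist_lt W hlen hmem hne1
  have htri : T.dist x r ≤ T.dist x (W.getVert 1) + T.dist (W.getVert 1) r :=
    hT.isConnected.dist_triangle
  have h1 : T.dist x (W.getVert 1) ≤ 1 := by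
    simpa using dist_le (Walk.cons hadj Walk.nil)
  omega

lemma par_uniq {T : SimpleGraph V} (hT : T.IsTree) (r : V) {x y : V}
    (hadj : T.Adj x y) (hlt : T.dist y r < T.dist x r) : y = par T r x := by
  have hreach : T.Reachable x r := hT.isConnected x r
  rw [par, dif_pos hreach]
  set W := Classical.choose hreach.exists_walk_length_eq_dist with hWdef
  have hlen : W.length = T.dist x r :=
    Classical.choose_spec hreach.exists_walk_length_eq_dist
  have hWpath : W.IsPath := W.isPath_of_length_eq_dist hlen
  obtain ⟨Q, hQ⟩ := (hT.isConnected y r).exists_walk_length_eq_dist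
  have htri : T.dist x r ≤ T.dist x y + T.dist y r := hT.isConnected.dist_triangle
  have h1 : T.dist x y ≤ 1 := by simpa using dist_le (Walk.cons hadj Walk.nil)
  have hdy : T.dist y r + 1 = T.dist x r := by omega
  have hlen' : (Walk.cons hadj Q).length = T.dist x r := by
    simp [Walk.length_cons, hQ, hdy]
  have hpath' : (Walk.cons hadj Q).IsPath :=
    (Walk.cons hadj Q).isPath_of_length_eq_dist hlen'
  have := hT.IsAcyclic.path_unique ⟨Walk.cons hadj Q, hpath'⟩ ⟨W, hWpath⟩
  have hval : (Walk.cons hadj Q) = W := congrArg Subtype.val this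
  have := congrArg (fun (w : T.Walk x r) => w.getVert 1) hval
  simpa [Walk.getVert_cons_succ] using this

lemma adj_dist_ne {T : SimpleGraph V} (hT : T.IsTree) (r : V) {x y : V}
    (hadj : T.Adj x y) : T.dist x r ≠ T.dist y r := by
  intro heq
  have hxy : x ≠ y := hadj.ne
  by_cases h0 : T.dist x r = 0
  · have hx2 := hT.isConnected.dist_eq_zero_iff.mp h0
    have hy2 := hT.isConnected.dist_eq_zero_iff.mp (heq ▸ h0)
    exact hxy (hx2.trans hy2.symm)
  · obtain ⟨Wx, hx1⟩ := (hT.isConnected x r).exists_walk_length_eq_dist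
    obtain ⟨Wy, hy1⟩ := (hT.isConnected y r).exists_walk_length_eq_dist
    have hynotin : y ∉ Wx.support := fun hmem => by
      have := support_dist_lt Wx hx1 hmem (Ne.symm hxy)
      omega
    have hWxpath : Wx.IsPath := Wx.isPath_of_length_eq_dist hx1
    have hWypath : Wy.IsPath := Wy.isPath_of_length_eq_dist hy1
    have hpath' : (Walk.cons hadj.symm Wx).IsPath := by
      rw [Walk.cons_isPath_iff]; exact ⟨hWxpath, hynotin⟩
    have := hT.IsAcyclic.path_unique ⟨Walk.cons hadj.symm Wx, hpath'⟩ ⟨Wy, hWypath⟩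
    have hval : (Walk.cons hadj.symm Wx) = Wy := congrArg Subtype.val this
    have hlen := congrArg Walk.length hval
    simp only [Walk.length_cons] at hlen
    omega

lemma par_dichotomy {T : SimpleGraph V} (hT : T.IsTree) (r : V) {x y : V}
    (hadj : T.Adj x y) : y = par T r x ∨ x = par T r y := by
  rcases lt_or_gt_of_ne (adj_dist_ne hT r hadj) with h | h
  · exact Or.inr (par_uniq hT r hadj.symm h)
  · exact Or.inl (par_uniq hT r hadj h)

lemma par_mem_of_path {T : SimpleGraph V} (hT : T.IsTree) (r : V) :
    ∀ {x y : V} (P : T.Walk x y), P.IsPath → x ≠ y → r ∉ P.support →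
      par T r x ∈ P.support ∨ par T r y ∈ P.support := by
  intro x y P
  induction P with
  | nil => exact fun _ hxy _ => absurd rfl hxy
  | @cons x w y h Q ih =>
    intro hP hxy hr
    have hrQ : r ∉ Q.support := fun hh => hr (by simp [Walk.support_cons, hh])
    rcases par_dichotomy hT r h with hpar | hpar
    · left
      rw [← hpar]
      simp [Walk.support_cons, Walk.start_mem_support]
    · by_cases hwy : w = y
      · subst hwy
        right
        rw [← hpar]
        simp [Walk.support_cons]
      · rw [Walk.cons_isPath_iff] at hP
        rcases ih hP.1 hwy hrQ with h1 | h1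
        · exact absurd (hpar ▸ h1) hP.2
        · right
          simp [Walk.support_cons]
          exact Or.inr h1

lemma edge_to_S_of_path {T : SimpleGraph V} (S : Set V) :
    ∀ {x y : V} (P : T.Walk x y), x ∉ S → (∃ z ∈ P.support, z ∈ S) →
      ∃ a b, s(a, b) ∈ P.edges ∧ b ∈ S := by
  intro x y P
  induction P with
  | nil =>
    rintro hx ⟨z, hz, hzS⟩
    simp [Walk.support_nil] at hz
    exact absurd (hz ▸ hzS) hx
  | @cons x w y h Q ih =>
    rintro hx ⟨z, hz, hzS⟩
    by_cases hw : w ∈ S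
    · exact ⟨x, w, by simp [Walk.edges_cons], hw⟩
    · have hzQ : z ∈ Q.support := by
        rcases (by simpa [Walk.support_cons] using hz : z = x ∨ z ∈ Q.support) with h1 | h1
        · exact absurd (h1 ▸ hzS) hx
        · exact h1
      obtain ⟨a, b, hab, hbS⟩ := ih hw ⟨z, hzQ, hzS⟩
      exact ⟨a, b, by simp only [Walk.edges_cons, List.mem_cons]; exact Or.inr hab, hbS⟩

lemma exists_spanning_tree {G : SimpleGraph V} [Finite (Sym2 V)] (hG : G.Connected) :
    ∃ T, T ≤ G ∧ T.IsTree := by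
  classical
  have hQne : {n | ∃ H : SimpleGraph V, (H ≤ G ∧ H.Connected) ∧ H.edgeSet.ncard = n}.Nonempty :=
    ⟨_, G, ⟨le_rfl, hG⟩, rfl⟩
  obtain ⟨H, ⟨hHG, hHc⟩, hHn⟩ := Nat.sInf_mem hQne
  refine ⟨H, hHG, hHc, ?_⟩
  intro x c hc
  have h3 := hc.three_le_length
  have hene : c.edges ≠ [] := by
    intro h
    have := c.length_edges
    rw [h] at this
    simp at this
    omega
  obtain ⟨e, he⟩ := List.exists_mem_of_ne_nil _ hene
  revert he
  induction e using Sym2.ind with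
  | _ a b =>
  intro he
  have hr := (adj_and_reachable_delete_edges_iff_exists_cycle).mpr ⟨x, c, hc, he⟩
  have hconn' := connected_sdiff_of_reachable hHc hr.2
  have hmem : s(a, b) ∈ H.edgeSet := c.edges_subset_edgeSet he
  have hne' : (H \ fromEdgeSet {s(a, b)}) ≤ G := le_trans sdiff_le hHG
  have hES : (H \ fromEdgeSet {s(a, b)}).edgeSet = H.edgeSet \ {s(a, b)} := by
    rw [edgeSet_sdiff, edgeSet_fromEdgeSet]
    have : ¬ (s(a, b)).IsDiag := by simp [hr.1.ne]
    rw [Set.diff_diff_right]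
    have h2 : H.edgeSet ∩ {e : Sym2 V | e.IsDiag} = ∅ := by
      ext f
      simp only [Set.mem_inter_iff, Set.mem_empty_iff_false, iff_false, not_and]
      intro hf
      induction f using Sym2.ind with
      | _ p q => intro hd; simp at hd; exact (hd ▸ (H.mem_edgeSet.mp hf)).ne rfl
    rw [show H.edgeSet ∩ Sym2.diagSet = ∅ from h2, Set.union_empty]
  have hlt : (H \ fromEdgeSet {s(a, b)}).edgeSet.ncard < H.edgeSet.ncard := by
    rw [hES]
    exact Set.ncard_lt_ncard (Set.sdiff_singleton_ssubset.mpr hmem) (Set.toFinite _)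
  have hmem2 : (H \ fromEdgeSet {s(a, b)}).edgeSet.ncard ∈
      {n | ∃ H : SimpleGraph V, (H ≤ G ∧ H.Connected) ∧ H.edgeSet.ncard = n} :=
    ⟨H \ fromEdgeSet {s(a, b)}, ⟨hne', hconn'⟩, rfl⟩
  have hle := Nat.sInf_le hmem2
  omega

lemma exchange {G T : SimpleGraph V} (hTG : T ≤ G) (hTt : T.IsTree) {u v a b : V}
    (huv : G.Adj u v) (hTuv : ¬ T.Adj u v) (P : T.Walk u v) (hP : P.IsPath)
    (he : s(a, b) ∈ P.edges) :
    ∃ T' : SimpleGraph V, T' ≤ G ∧ T'.IsTree ∧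
      T'.edgeSet = insert s(u, v) (T.edgeSet \ {s(a, b)}) := by
  classical
  have hne_uv : u ≠ v := huv.ne
  have hTab : T.Adj a b := P.adj_of_mem_edges he
  have hFG : fromEdgeSet {s(u, v)} ≤ G := by
    intro x y hxy
    rw [fromEdgeSet_adj] at hxy
    obtain ⟨h1, h2⟩ := hxy
    simp only [Set.mem_singleton_iff, Sym2.eq_iff] at h1
    rcases h1 with ⟨rfl, rfl⟩ | ⟨rfl, rfl⟩
    · exact huv
    · exact huv.symm
  set Tp := T ⊔ fromEdgeSet {s(u, v)} with hTp
  have hTpG : Tp ≤ G := sup_le hTG hFG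
  have hTpc : Tp.Connected := hTt.isConnected.mono le_sup_left
  set P' : Tp.Walk u v := P.mapLe le_sup_left with hP'def
  have hP'e : P'.edges = P.edges := edges_mapLe _ _
  have hP'path : P'.IsPath := hP.mapLe _
  have hTpuv : Tp.Adj u v := by
    rw [hTp, sup_adj]
    exact Or.inr ((fromEdgeSet_adj _).mpr ⟨rfl, hne_uv⟩)
  have hnotin : s(u, v) ∉ (P'.reverse).edges := by
    rw [Walk.edges_reverse, List.mem_reverse, hP'e]
    exact fun hmem => hTuv (P.adj_of_mem_edges hmem)
  have hcyc : (Walk.cons hTpuv (P'.reverse : Tp.Walk v u)).IsCycle :=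
    Path.cons_isCycle ⟨P'.reverse, hP'path.reverse⟩ hTpuv hnotin
  have hab_in : s(a, b) ∈ (Walk.cons hTpuv P'.reverse).edges := by
    rw [Walk.edges_cons, List.mem_cons]
    exact Or.inr (by rw [Walk.edges_reverse, List.mem_reverse, hP'e]; exact he)
  have hkey := (adj_and_reachable_delete_edges_iff_exists_cycle
      (G := Tp) (v := a) (w := b)).mpr ⟨u, _, hcyc, hab_in⟩
  set T' := Tp \ fromEdgeSet {s(a, b)} with hT'def
  have hT'c : T'.Connected := connected_sdiff_of_reachable hTpc hkey.2
  have hT'G : T' ≤ G := le_trans sdiff_le hTpG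
  have huvab : s(u, v) ≠ s(a, b) := by
    intro hh
    exact hTuv (by rw [← T.mem_edgeSet, hh]; exact T.mem_edgeSet.mpr hTab)
  have hT'ac : T'.IsAcyclic := by
    intro x c hc
    by_cases hm : s(u, v) ∈ c.edges
    · have h2 := (adj_and_reachable_delete_edges_iff_exists_cycle
        (G := T') (v := u) (w := v)).mpr ⟨x, c, hc, hm⟩
      obtain ⟨-, ⟨W⟩⟩ := h2
      have hle : (T' \ fromEdgeSet {s(u, v)}) ≤ T := by
        intro p q hpq
        rw [sdiff_adj, sdiff_adj, sup_adj] at hpq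
        rcases hpq.1.1 with h3 | h3
        · exact h3
        · exact absurd h3 hpq.2
      have hWedges : ∀ f ∈ W.edges, f ≠ s(a, b) := by
        intro f hf
        have := W.edges_subset_edgeSet hf
        rw [edgeSet_deleteEdges] at this
        have h4 := this.1
        rw [hT'def, edgeSet_sdiff, edgeSet_fromEdgeSet] at h4
        intro hfe
        exact h4.2 ⟨hfe ▸ rfl, by simp [hfe, hTab.ne]⟩
      set W' := W.mapLe hle with hW'def
      have hW'e : W'.edges = W.edges := edges_mapLe _ _
      have hPu := hTt.IsAcyclic.path_unique ⟨P, hP⟩ W'.toPath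
      have hPval : P = (W'.toPath : T.Walk u v) := congrArg Subtype.val hPu
      have : s(a, b) ∈ (W'.toPath : T.Walk u v).edges := hPval ▸ he
      have h5 := Walk.edges_toPath_subset W' this
      rw [hW'e] at h5
      exact hWedges _ h5 rfl
    · have hsub : ∀ f ∈ c.edges, f ∈ T.edgeSet := by
        intro f hf
        have h1 := c.edges_subset_edgeSet hf
        rw [hT'def, edgeSet_sdiff, hTp, edgeSet_sup, edgeSet_fromEdgeSet] at h1
        rcases h1.1 with h3 | h3
        · exact h3
        · exact absurd (h3.1 : f ∈ ({s(u, v)} : Set (Sym2 V))) (by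
            simp only [Set.mem_singleton_iff]
            intro hfe
            exact hm (hfe ▸ hf))
      exact hTt.IsAcyclic (c.transfer T hsub) (hc.transfer hsub)
  refine ⟨T', hT'G, ⟨hT'c, hT'ac⟩, ?_⟩
  have hdab : ¬ (s(a, b)).IsDiag := by simp [hTab.ne]
  have hduv : ¬ (s(u, v)).IsDiag := by simp [hne_uv]
  rw [hT'def, edgeSet_sdiff, edgeSet_fromEdgeSet, hTp, edgeSet_sup, edgeSet_fromEdgeSet]
  ext f
  simp only [Set.mem_diff, Set.mem_union, Set.mem_singleton_iff, Set.mem_insert_iff,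
    Set.mem_setOf_eq]
  constructor
  · rintro ⟨h1 | h1, h2⟩
    · right
      refine ⟨h1, fun hfe => h2 ⟨hfe, hfe ▸ hdab⟩⟩
    · exact Or.inl h1.1
  · rintro (rfl | ⟨h1, h2⟩)
    · exact ⟨Or.inr ⟨rfl, hduv⟩, fun hh => huvab hh.1⟩
    · exact ⟨Or.inl h1, fun hh => h2 hh.1⟩

end Stmt5Aux

/-- Any SD-set `S` of a connected graph extends to a vertex cover `C` with
`|C| ≤ 2|S| - 1`. -/
theorem stmt5 [Fintype V] (G : SimpleGraph V) (hG : G.Connected) (S : Set V)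
    (hS : IsSDSet G S) :
    ∃ C : Set V, S ⊆ C ∧ _root_.IsVertexCover G C ∧ C.ncard ≤ 2 * S.ncard - 1 := by
  classical
  set ed : SimpleGraph V → Set (Sym2 V) :=
    fun T => {e | e ∈ T.edgeSet ∧ ∀ x ∈ e, x ∉ S} with hed
  set KQ : Set ℕ := {n | ∃ T : SimpleGraph V, (T ≤ G ∧ T.IsTree) ∧ (ed T).ncard = n} with hKQ
  obtain ⟨T₀, hT₀⟩ := Stmt5Aux.exists_spanning_tree hG
  have hKQne : KQ.Nonempty := ⟨_, T₀, hT₀, rfl⟩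
  have hKQbdd : BddAbove KQ := by
    refine ⟨Nat.card (Sym2 V), ?_⟩
    rintro n ⟨T, -, rfl⟩
    calc (ed T).ncard ≤ (Set.univ : Set (Sym2 V)).ncard :=
          Set.ncard_le_ncard (Set.subset_univ _) Set.finite_univ
      _ = Nat.card (Sym2 V) := Set.ncard_univ _
  obtain ⟨T, hTsp, hkT⟩ := Nat.sSup_mem hKQne hKQbdd
  have hmax : ∀ T' : SimpleGraph V, T' ≤ G → T'.IsTree → (ed T').ncard ≤ (ed T).ncard := by
    intro T' h1 h2
    rw [hkT]
    exact le_csSup hKQbdd ⟨T', ⟨h1, h2⟩, rfl⟩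
  have hTspan : IsSpanningTree G T := ⟨hTsp.1, hTsp.2⟩
  have hTc : T.Connected := hTsp.2.isConnected
  obtain ⟨v₀⟩ := hG.nonempty
  have hrex : ∃ r, r ∈ S := by
    rcases (hS v₀ T hTspan : v₀ ∈ S ∨ ∃ u ∈ S, T.Adj v₀ u) with h | ⟨s, hs, -⟩
    · exact ⟨v₀, h⟩
    · exact ⟨s, hs⟩
  obtain ⟨r, hrS⟩ := hrex
  set X : Set V := {x | x ∉ S ∧ Stmt5Aux.par T r x ∉ S} with hX
  refine ⟨S ∪ X, Set.subset_union_left, ?_, ?_⟩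
  · -- vertex cover
    intro x y hadj
    by_contra hcon
    push_neg at hcon
    have hxS : x ∉ S := fun h => hcon.1 (Or.inl h)
    have hyS : y ∉ S := fun h => hcon.2 (Or.inl h)
    have hpx : Stmt5Aux.par T r x ∈ S := by
      by_contra hh; exact hcon.1 (Or.inr ⟨hxS, hh⟩)
    have hpy : Stmt5Aux.par T r y ∈ S := by
      by_contra hh; exact hcon.2 (Or.inr ⟨hyS, hh⟩)
    have hxy : x ≠ y := hadj.ne
    obtain ⟨W⟩ := hTc.preconnected x y
    set Pw := W.toPath with hPwdef
    by_cases hmeet : ∃ z ∈ (Pw : T.Walk x y).support, z ∈ S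
    · have hTxy : ¬ T.Adj x y := by
        intro hadjT
        have hsingle : (Walk.cons hadjT Walk.nil).IsPath := by
          simp [Walk.cons_isPath_iff, hxy]
        have huniq := hTsp.2.IsAcyclic.path_unique Pw ⟨Walk.cons hadjT Walk.nil, hsingle⟩
        obtain ⟨z, hz1, hz2⟩ := hmeet
        rw [huniq] at hz1
        simp only [Walk.support_cons, Walk.support_nil, List.mem_cons,
          List.mem_singleton, List.not_mem_nil, or_false] at hz1
        rcases hz1 with rfl | rfl
        exacts [hxS hz2, hyS hz2]
      obtain ⟨a, b, hab, hbS⟩ := Stmt5Aux.edge_to_S_of_path S (Pw : T.Walk x y) hxS hmeet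
      obtain ⟨T', hT'G, hT'tree, hT'edge⟩ :=
        Stmt5Aux.exchange hTsp.1 hTsp.2 hadj hTxy (Pw : T.Walk x y) Pw.2 hab
      have hpredxy : ∀ z ∈ s(x, y), z ∉ S := by
        intro z hz
        rw [Sym2.mem_iff] at hz
        rcases hz with rfl | rfl
        exacts [hxS, hyS]
      have hxyT : s(x, y) ∉ T.edgeSet := hTxy
      have hedT' : ed T' = insert s(x, y) (ed T) := by
        ext f
        simp only [hed, Set.mem_setOf_eq, hT'edge, Set.mem_insert_iff, Set.mem_diff,
          Set.mem_singleton_iff]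
        constructor
        · rintro ⟨rfl | ⟨h1, h2⟩, hpred⟩
          · exact Or.inl rfl
          · exact Or.inr ⟨h1, hpred⟩
        · rintro (rfl | ⟨h1, h2⟩)
          · exact ⟨Or.inl rfl, hpredxy⟩
          · refine ⟨Or.inr ⟨h1, ?_⟩, h2⟩
            intro hfe
            exact h2 b (hfe ▸ (Sym2.mem_mk_right a b)) hbS
      have hnotmem : s(x, y) ∉ ed T := fun h => hxyT h.1
      have hle := hmax T' hT'G hT'tree
      rw [hedT', Set.ncard_insert_of_notMem hnotmem (Set.toFinite _)] at hle
      omega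
    · push_neg at hmeet
      have hrnot : r ∉ (Pw : T.Walk x y).support := fun h => hmeet r h hrS
      rcases Stmt5Aux.par_mem_of_path hTsp.2 r (Pw : T.Walk x y) Pw.2 hxy hrnot with h | h
      · exact hmeet _ h hpx
      · exact hmeet _ h hpy
  · -- cardinality
    set B := ed T with hB
    set A : Set (Sym2 V) := {e | e ∈ T.edgeSet ∧ ¬ ∀ x ∈ e, x ∉ S} with hA
    have hsplit : B ∪ A = T.edgeSet := by
      ext f
      constructor
      · rintro (h | h); exacts [h.1, h.1]
      · intro hf
        by_cases hp : ∀ x ∈ f, x ∉ S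
        · exact Or.inl ⟨hf, hp⟩
        · exact Or.inr ⟨hf, hp⟩
    have hdisj : Disjoint B A := by
      rw [Set.disjoint_left]
      rintro f ⟨-, h1⟩ ⟨-, h2⟩
      exact h2 h1
    have hBA : B.ncard + A.ncard = T.edgeSet.ncard := by
      rw [← Set.ncard_union_eq hdisj (Set.toFinite _) (Set.toFinite _), hsplit]
    haveI : Fintype T.edgeSet := (Set.toFinite _).fintype
    have hE : T.edgeSet.ncard + 1 = Fintype.card V := by
      have h1 := hTsp.2.card_edgeFinset
      have h2 : T.edgeFinset.card = T.edgeSet.ncard := by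
        rw [← coe_edgeFinset, Set.ncard_coe_finset]
      omega
    have hdom : ∀ x : V, ∃ s, x ∉ S → (s ∈ S ∧ T.Adj x s) := by
      intro x
      by_cases hx : x ∈ S
      · exact ⟨x, fun h => absurd hx h⟩
      · rcases (hS x T hTspan : x ∈ S ∨ ∃ u ∈ S, T.Adj x u) with h | ⟨s, hs1, hs2⟩
        · exact absurd h hx
        · exact ⟨s, fun _ => ⟨hs1, hs2⟩⟩
    choose sx hsx using hdom
    have hScA : Sᶜ.ncard ≤ A.ncard := by
      have hinj : Set.InjOn (fun x => s(x, sx x)) Sᶜ := by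
        intro p hp q hq hpq
        simp only [Sym2.eq_iff] at hpq
        rcases hpq with ⟨rfl, -⟩ | ⟨h1, h2⟩
        · rfl
        · exact absurd (by rw [h1]; exact (hsx q hq).1 : p ∈ S) hp
      have himg : (fun x => s(x, sx x)) '' Sᶜ ⊆ A := by
        rintro f ⟨p, hp, rfl⟩
        refine ⟨T.mem_edgeSet.mpr (hsx p hp).2, ?_⟩
        push_neg
        exact ⟨sx p, Sym2.mem_mk_right _ _, (hsx p hp).1⟩
      calc Sᶜ.ncard = ((fun x => s(x, sx x)) '' Sᶜ).ncard :=
            (Set.ncard_image_of_injOn hinj).symm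
        _ ≤ A.ncard := Set.ncard_le_ncard himg (Set.toFinite _)
    have hXB : X.ncard ≤ B.ncard := by
      have hadjpar : ∀ x ∈ X, T.Adj x (Stmt5Aux.par T r x) := by
        intro x hx
        exact (Stmt5Aux.par_spec hTsp.2 r (fun h => hx.1 (by rw [h]; exact hrS))).1
      have hinj : Set.InjOn (fun x => s(x, Stmt5Aux.par T r x)) X := by
        intro p hp q hq hpq
        simp only [Sym2.eq_iff] at hpq
        rcases hpq with ⟨rfl, -⟩ | ⟨h1, h2⟩
        · rfl
        · exfalso
          have hpr : p ≠ r := fun h => hp.1 (by rw [h]; exact hrS)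
          have hqr : q ≠ r := fun h => hq.1 (by rw [h]; exact hrS)
          have e1 := (Stmt5Aux.par_spec hTsp.2 r hpr).2
          have e2 := (Stmt5Aux.par_spec hTsp.2 r hqr).2
          rw [h2] at e1
          rw [← h1] at e2
          omega
      have himg : (fun x => s(x, Stmt5Aux.par T r x)) '' X ⊆ B := by
        rintro f ⟨p, hp, rfl⟩
        refine ⟨T.mem_edgeSet.mpr (hadjpar p hp), ?_⟩
        intro z hz
        rw [Sym2.mem_iff] at hz
        rcases hz with rfl | rfl
        exacts [hp.1, hp.2]
      calc X.ncard = ((fun x => s(x, Stmt5Aux.par T r x)) '' X).ncard :=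
            (Set.ncard_image_of_injOn hinj).symm
        _ ≤ B.ncard := Set.ncard_le_ncard himg (Set.toFinite _)
    have hcompl : S.ncard + Sᶜ.ncard = Fintype.card V := by
      rw [Set.ncard_add_ncard_compl S (Set.toFinite _) (Set.toFinite _)]
      exact Nat.card_eq_fintype_card
    have hS1 : 0 < S.ncard := (Set.ncard_pos (Set.toFinite _)).mpr ⟨r, hrS⟩
    have hCle : (S ∪ X).ncard ≤ S.ncard + X.ncard := Set.ncard_union_le _ _
    omega
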